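/- General coarsening identification (Proposition 2): under assumptions (a)–(c), for every bounded measurable f : 𝒳 → ℝ and every bounded 𝓖-measurable random variable Z, E[Z·f(X)] = E[Z·w·f(X)]. Equivalently, almost everywhere on {C ≠ ∞}, E[f(X)|𝓖] = E[S·f(X)|𝓖]/η, while on {C = ∞}, E[f(X)|𝓖] = f(X); hence the conditional law of the full data X given the initially observed data (C, W), and therefore the complete-data distribution, is identified from the observed data (C, W, S, and X on {S = 1}). -/

import Mathlib

open MeasureTheory

/-- General coarsening identification (Proposition 2): under assumptions (a)–(c),
for every bounded measurable `f : 𝒳 → ℝ` and bounded `𝓖`-measurable `Z`,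
`E[Z·f(X)] = E[Z·w·f(X)]`; equivalently, a.e. on `{C ≠ ∞}`,
`E[f(X)|𝓖] = E[S·f(X)|𝓖]/η`, while on `{C = ∞}`, `E[f(X)|𝓖] = f(X)`. Hence the
complete-data distribution is identified from the observed data. -/
theorem general_coarsening_identification
    {Ω : Type*} [MeasurableSpace Ω] (P : Measure Ω) [IsProbabilityMeasure P]
    {𝒳 : Type*} [MeasurableSpace 𝒳] {𝒴 : Type*} [MeasurableSpace 𝒴]
    {K : Type*} [MeasurableSpace K] [MeasurableSingletonClass K] [Countable K] [DecidableEq K]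
    (infty : K)
    (X : Ω → 𝒳) (C : Ω → K) (W : Ω → 𝒴) (S : Ω → ℝ)
    (hX : Measurable X) (hC : Measurable C) (hW : Measurable W) (hS : Measurable S)
    (hS01 : ∀ ω, S ω = 0 ∨ S ω = 1)
    (𝓖 : MeasurableSpace Ω)
    (h𝓖 : 𝓖 = MeasurableSpace.comap (fun ω => (C ω, W ω)) inferInstance)
    (η : Ω → ℝ) (hη : η = P[S | 𝓖])
    (w : Ω → ℝ) (hw : w = fun ω => if C ω = infty then 1 else S ω / η ω)
    -- (a) on {C = ∞} the full data are initially observed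
    (ha : ∀ f : 𝒳 → ℝ, Measurable f → (∃ B, ∀ x, |f x| ≤ B) →
      ∀ᵐ ω ∂P, C ω = infty → (P[fun ω' => f (X ω') | 𝓖]) ω = f (X ω))
    -- (b) no informative second-stage missingness (Assumption 4)
    (hb : ∀ f : 𝒳 → ℝ, Measurable f → (∃ B, ∀ x, |f x| ≤ B) →
      ∀ᵐ ω ∂P, C ω ≠ infty →
        (P[fun ω' => S ω' * f (X ω') | 𝓖]) ω
          = η ω * (P[fun ω' => f (X ω') | 𝓖]) ω)
    -- (c) positivity (Assumption 5)
    (ε : ℝ) (hε : 0 < ε)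
    (hc : ∀ᵐ ω ∂P, C ω ≠ infty → ε ≤ η ω) :
    ∀ f : 𝒳 → ℝ, Measurable f → (∃ B, ∀ x, |f x| ≤ B) →
      (∀ Z : Ω → ℝ, Measurable[𝓖] Z → (∃ B, ∀ ω, |Z ω| ≤ B) →
        ∫ ω, Z ω * f (X ω) ∂P = ∫ ω, Z ω * w ω * f (X ω) ∂P)
      ∧ (∀ᵐ ω ∂P, C ω ≠ infty →
          (P[fun ω' => f (X ω') | 𝓖]) ω
            = (P[fun ω' => S ω' * f (X ω') | 𝓖]) ω / η ω)
      ∧ (∀ᵐ ω ∂P, C ω = infty → (P[fun ω' => f (X ω') | 𝓖]) ω = f (X ω)) := by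
  intro f hf hfB
  obtain ⟨B₀, hB₀⟩ := hfB
  set B := max B₀ 0 with hBdef
  have hB : ∀ x, |f x| ≤ B := fun x => le_trans (hB₀ x) (le_max_left _ _)
  have hBnn : (0 : ℝ) ≤ B := le_max_right _ _
  have hm : 𝓖 ≤ _ := le_of_eq_of_le h𝓖 (measurable_iff_comap_le.mp (hC.prodMk hW))
  -- measurability of {C = infty} w.r.t. 𝓖
  have hA𝓖 : MeasurableSet[𝓖] {ω | C ω = infty} := by
    rw [h𝓖]
    refine ⟨{infty} ×ˢ Set.univ, (measurableSet_singleton infty).prod MeasurableSet.univ, ?_⟩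
    ext ω; simp [eq_comm]
  have hA := hm _ hA𝓖
  -- basic integrabilities
  have hfX_meas := hf.comp hX
  have hfX_int : Integrable (fun ω => f (X ω)) P := by
    refine (integrable_const B).mono' hfX_meas.aestronglyMeasurable ?_
    exact Filter.Eventually.of_forall fun ω => by simpa [Real.norm_eq_abs] using hB (X ω)
  have hSabs : ∀ ω, |S ω| ≤ 1 := by
    intro ω; rcases hS01 ω with h | h <;> simp [h]
  have hSfX_int : Integrable (fun ω => S ω * f (X ω)) P := by
    refine (integrable_const B).mono' ((hS.mul hfX_meas).aestronglyMeasurable) ?_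
    refine Filter.Eventually.of_forall fun ω => ?_
    have := hB (X ω)
    calc ‖S ω * f (X ω)‖ = |S ω| * |f (X ω)| := abs_mul _ _
      _ ≤ 1 * B := mul_le_mul (hSabs ω) this (abs_nonneg _) zero_le_one
      _ = B := one_mul B
  have hη_sm : StronglyMeasurable[𝓖] η := hη ▸ stronglyMeasurable_condExp
  have hη_meas := (hη_sm.mono hm).measurable
  refine ⟨?_, ?_, ha f hf ⟨B, hB⟩⟩
  · intro Z hZ hZB
    obtain ⟨BZ, hBZ⟩ := hZB
    have hZm := hZ.mono hm le_rfl
    have hZsm : StronglyMeasurable[𝓖] Z := hZ.stronglyMeasurable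
    set cf := P[fun ω' => f (X ω') | 𝓖] with hcf
    set csf := P[fun ω' => S ω' * f (X ω') | 𝓖] with hcsf
    have hcf_int : Integrable cf P := integrable_condExp
    -- Step A : LHS = ∫ Z * cf
    have hZfX_int : Integrable (fun ω => Z ω * f (X ω)) P :=
      hfX_int.bdd_mul hZm.aestronglyMeasurable
        (Filter.Eventually.of_forall fun ω => by simpa [Real.norm_eq_abs] using hBZ ω)
    have hA1 : ∫ ω, Z ω * f (X ω) ∂P = ∫ ω, Z ω * cf ω ∂P := by
      have h1 := integral_condExp (μ := P) (f := fun ω => Z ω * f (X ω)) hm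
      have h2 : P[(fun ω => Z ω * f (X ω)) | 𝓖] =ᵐ[P] fun ω => Z ω * cf ω :=
        condExp_mul_of_stronglyMeasurable_left hZsm hZfX_int hfX_int
      rw [← h1, integral_congr_ae h2]
    -- the 𝓖-measurable weight off {C = infty}
    set Z₂ : Ω → ℝ := fun ω => if C ω = infty then 0 else Z ω / η ω with hZ₂def
    have hZ₂meas𝓖 : Measurable[𝓖] Z₂ :=
      Measurable.ite hA𝓖 measurable_const (hZ.div hη_sm.measurable)
    have hZ₂sm : StronglyMeasurable[𝓖] Z₂ := hZ₂meas𝓖.stronglyMeasurable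
    have hZ₂m := (hZ₂sm.mono hm).measurable
    have hZ₂bdd : ∀ᵐ ω ∂P, ‖Z₂ ω‖ ≤ BZ / ε := by
      filter_upwards [hc] with ω hω
      by_cases h : C ω = infty
      · have hBZnn : 0 ≤ BZ := le_trans (abs_nonneg _) (hBZ ω)
        simp only [hZ₂def, h, if_pos, Real.norm_eq_abs, abs_zero]
        positivity
      · have hηε : ε ≤ η ω := hω h
        have hBZnn : 0 ≤ BZ := le_trans (abs_nonneg _) (hBZ ω)
        simp only [hZ₂def, h, if_neg, not_false_iff, if_false, Real.norm_eq_abs, abs_div]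
        rw [abs_of_pos (lt_of_lt_of_le hε hηε)]
        exact div_le_div₀ hBZnn (hBZ ω) hε hηε
    have hZ₂SfX_int : Integrable (fun ω => Z₂ ω * (S ω * f (X ω))) P :=
      hSfX_int.bdd_mul hZ₂m.aestronglyMeasurable hZ₂bdd
    -- split the RHS integrand pointwise
    have hsplit : ∀ ω, Z ω * w ω * f (X ω)
        = (if C ω = infty then Z ω * f (X ω) else 0) + Z₂ ω * (S ω * f (X ω)) := by
      intro ω
      by_cases h : C ω = infty
      · simp [hw, hZ₂def, h]
      · simp only [hw, hZ₂def, h, if_neg, not_false_iff, if_false]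
        field_simp
        ring
    have hg1_int : Integrable (fun ω => if C ω = infty then Z ω * f (X ω) else 0) P := by
      refine (integrable_const (BZ * B)).mono'
        (Measurable.ite hA (hZm.mul hfX_meas) measurable_const).aestronglyMeasurable ?_
      refine Filter.Eventually.of_forall fun ω => ?_
      by_cases h : C ω = infty
      · simp only [h, if_pos, Real.norm_eq_abs, abs_mul]
        exact mul_le_mul (hBZ ω) (hB (X ω)) (abs_nonneg _)
          (le_trans (abs_nonneg _) (hBZ ω))
      · simp only [h, if_neg, not_false_iff, if_false, norm_zero]
        exact mul_nonneg (le_trans (abs_nonneg _) (hBZ ω)) (le_trans (abs_nonneg _) (hB (X ω)))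
    -- first piece: use (a)
    have hg1 : ∫ ω, (if C ω = infty then Z ω * f (X ω) else 0) ∂P
        = ∫ ω, (if C ω = infty then Z ω * cf ω else 0) ∂P := by
      refine integral_congr_ae ?_
      filter_upwards [ha f hf ⟨B, hB⟩] with ω hω
      by_cases h : C ω = infty
      · simp [h, hω h, hcf]
      · simp [h]
    -- second piece: pull out Z₂, then use (b)
    have hg2a : ∫ ω, Z₂ ω * (S ω * f (X ω)) ∂P = ∫ ω, Z₂ ω * csf ω ∂P := by
      have h1 := integral_condExp (μ := P) (f := fun ω => Z₂ ω * (S ω * f (X ω))) hm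
      have h2 : P[(fun ω => Z₂ ω * (S ω * f (X ω))) | 𝓖] =ᵐ[P] fun ω => Z₂ ω * csf ω :=
        condExp_mul_of_stronglyMeasurable_left hZ₂sm hZ₂SfX_int hSfX_int
      rw [← h1, integral_congr_ae h2]
    have hg2b : ∫ ω, Z₂ ω * csf ω ∂P
        = ∫ ω, (if C ω = infty then 0 else Z ω * cf ω) ∂P := by
      refine integral_congr_ae ?_
      filter_upwards [hb f hf ⟨B, hB⟩, hc] with ω h1 h2
      by_cases h : C ω = infty
      · simp [hZ₂def, h]
      · have hη0 : η ω ≠ 0 := (lt_of_lt_of_le hε (h2 h)).ne'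
        rw [← hcsf, ← hcf] at h1
        simp only [hZ₂def, h, if_neg, not_false_iff, if_false]
        rw [h1 h]
        field_simp
    -- recombine
    have hrecomb : ∀ ω, (if C ω = infty then Z ω * cf ω else 0)
        + (if C ω = infty then 0 else Z ω * cf ω) = Z ω * cf ω := by
      intro ω; by_cases h : C ω = infty <;> simp [h]
    have hZcf_int : Integrable (fun ω => Z ω * cf ω) P :=
      hcf_int.bdd_mul hZm.aestronglyMeasurable
        (Filter.Eventually.of_forall fun ω => by simpa [Real.norm_eq_abs] using hBZ ω)
    have hcf_bdd : ∀ᵐ ω ∂P, |cf ω| ≤ B := by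
      have hbdd : ∀ᵐ ω ∂P, |f (X ω)| ≤ (B.toNNReal : ℝ) := by
        refine Filter.Eventually.of_forall fun ω => ?_
        rw [Real.coe_toNNReal _ hBnn]; exact hB (X ω)
      have := ae_bdd_condExp_of_ae_bdd (m := 𝓖) (μ := P) hbdd
      filter_upwards [this] with ω hω
      rwa [Real.coe_toNNReal _ hBnn] at hω
    have hcf_sm : StronglyMeasurable[𝓖] cf := by rw [hcf]; exact stronglyMeasurable_condExp
    have hcf_meas := (hcf_sm.mono hm).measurable
    have hg1'_int : Integrable (fun ω => if C ω = infty then Z ω * cf ω else 0) P := by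
      refine (integrable_const (BZ * B)).mono'
        (Measurable.ite hA (hZm.mul hcf_meas) measurable_const).aestronglyMeasurable ?_
      filter_upwards [hcf_bdd] with ω hω
      by_cases h : C ω = infty
      · simp only [h, if_pos, Real.norm_eq_abs, abs_mul]
        exact mul_le_mul (hBZ ω) hω (abs_nonneg _) (le_trans (abs_nonneg _) (hBZ ω))
      · simp only [h, if_neg, not_false_iff, if_false, norm_zero]
        exact mul_nonneg (le_trans (abs_nonneg _) (hBZ ω)) hBnn
    have hg2'_int : Integrable (fun ω => if C ω = infty then 0 else Z ω * cf ω) P := by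
      refine (integrable_const (BZ * B)).mono'
        (Measurable.ite hA measurable_const (hZm.mul hcf_meas)).aestronglyMeasurable ?_
      filter_upwards [hcf_bdd] with ω hω
      by_cases h : C ω = infty
      · simp only [h, if_pos, norm_zero]
        exact mul_nonneg (le_trans (abs_nonneg _) (hBZ ω)) hBnn
      · simp only [h, if_neg, not_false_iff, if_false, Real.norm_eq_abs, abs_mul]
        exact mul_le_mul (hBZ ω) hω (abs_nonneg _) (le_trans (abs_nonneg _) (hBZ ω))
    calc ∫ ω, Z ω * f (X ω) ∂P = ∫ ω, Z ω * cf ω ∂P := hA1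
      _ = ∫ ω, ((if C ω = infty then Z ω * cf ω else 0)
            + (if C ω = infty then 0 else Z ω * cf ω)) ∂P := by
          refine integral_congr_ae (Filter.Eventually.of_forall fun ω => ?_)
          exact (hrecomb ω).symm
      _ = (∫ ω, (if C ω = infty then Z ω * cf ω else 0) ∂P)
            + ∫ ω, (if C ω = infty then 0 else Z ω * cf ω) ∂P :=
          integral_add hg1'_int hg2'_int
      _ = (∫ ω, (if C ω = infty then Z ω * f (X ω) else 0) ∂P)
            + ∫ ω, Z₂ ω * (S ω * f (X ω)) ∂P := by rw [hg1, hg2a, hg2b]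
      _ = ∫ ω, ((if C ω = infty then Z ω * f (X ω) else 0)
            + Z₂ ω * (S ω * f (X ω))) ∂P := (integral_add hg1_int hZ₂SfX_int).symm
      _ = ∫ ω, Z ω * w ω * f (X ω) ∂P := by
          refine integral_congr_ae (Filter.Eventually.of_forall fun ω => ?_)
          exact (hsplit ω).symm
  · filter_upwards [hb f hf ⟨B, hB⟩, hc] with ω h1 h2 hne
    have hη0 : η ω ≠ 0 := (lt_of_lt_of_le hε (h2 hne)).ne'
    rw [h1 hne, mul_div_cancel_left₀ _ hη0]
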